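/- For every integer q ≥ 2 and every word w of length k ≥ 1 over an alphabet of q letters, the generating function of h_w satisfies, as an identity of formal power series over ℚ, (z^k + (1 − q·z)·Â_w(z)) · Σ_{n=0}^{∞} h_w(n)·z^n = z^k, where Â_w(z) = Σ_{i=1}^{k} b_i·z^{k−i} is the autocorrelation polynomial of w (so Â_w(z) = b_k·z^0 + b_{k-1}·z^1 + … + b_1·z^{k-1}). -/

import Mathlib

/-- The `i`-th autocorrelation bit `b_i` of a word `w` (for `1 ≤ i ≤ w.length`):
`1` if the prefix of `w` of length `i` equals the suffix of `w` of length `i`, else `0`. -/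
def acorrBit {α : Type*} [DecidableEq α] (w : List α) (i : ℕ) : ℕ :=
  if w.take i = w.drop (w.length - i) then 1 else 0

/-- The inverse autocorrelation polynomial `A_w(x) = ∑_{i=1}^k b_i x^(i-1)`, over `ℝ`. -/
noncomputable def APolyR {α : Type*} [DecidableEq α] (w : List α) : Polynomial ℝ :=
  ∑ i ∈ Finset.range w.length, Polynomial.C (acorrBit w (i + 1) : ℝ) * Polynomial.X ^ i

/-- The inverse autocorrelation polynomial `A_w(x)`, over `ℂ`. -/
noncomputable def APolyC {α : Type*} [DecidableEq α] (w : List α) : Polynomial ℂ :=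
  ∑ i ∈ Finset.range w.length, Polynomial.C (acorrBit w (i + 1) : ℂ) * Polynomial.X ^ i

/-- The recurrence polynomial `P_w(x) = 1 + (x - q)·A_w(x)`, over `ℝ`. -/
noncomputable def PPolyR (q : ℕ) {α : Type*} [DecidableEq α] (w : List α) : Polynomial ℝ :=
  1 + (Polynomial.X - Polynomial.C (q : ℝ)) * APolyR w

/-- The recurrence polynomial `P_w(x) = 1 + (x - q)·A_w(x)`, over `ℂ`. -/
noncomputable def PPolyC (q : ℕ) {α : Type*} [DecidableEq α] (w : List α) : Polynomial ℂ :=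
  1 + (Polynomial.X - Polynomial.C (q : ℂ)) * APolyC w

/-- `h_w(n)`: the number of words of length `n` over `Fin q` whose last `w.length` letters
equal `w` and which contain no other occurrence of `w` as consecutive letters. -/
noncomputable def hitCount (q : ℕ) (w : List (Fin q)) (n : ℕ) : ℕ :=
  Nat.card {l : List (Fin q) // l.length = n ∧ l.drop (n - w.length) = w ∧
    ∀ p < n - w.length, (l.drop p).take w.length ≠ w}

/-- The first hitting probability `P_h(w,n) = h_w(n+k)/q^(n+k)` where `k = w.length`. -/
noncomputable def hitProb (q : ℕ) (w : List (Fin q)) (n : ℕ) : ℝ :=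
  (hitCount q w (n + w.length) : ℝ) / (q : ℝ) ^ (n + w.length)

/-- The constant `C_{w/w'} = ln(1+r)/r` with `r = (A_w(q) − A_{w'}(q))/A_{w'}(q)`. -/
noncomputable def Crat (q : ℕ) (w w' : List (Fin q)) : ℝ :=
  Real.log (1 + ((APolyR w).eval (q : ℝ) - (APolyR w').eval (q : ℝ)) / (APolyR w').eval (q : ℝ)) /
    (((APolyR w).eval (q : ℝ) - (APolyR w').eval (q : ℝ)) / (APolyR w').eval (q : ℝ))

/-- The partial-fraction coefficient `c_w = 1/P_w'(α_m)`. -/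
noncomputable def cwCoef (q : ℕ) (w : List (Fin q)) (αm : ℝ) : ℝ :=
  1 / ((PPolyR q w).derivative.eval αm)

namespace Stmt18Proof

lemma take_drop_take {α : Type*} (l : List α) {p k m : ℕ} (h : p + k ≤ m) :
    ((l.take m).drop p).take k = (l.drop p).take k := by
  rw [List.drop_take, List.take_take, min_eq_left (by omega)]

lemma occ_le {q : ℕ} {w l : List (Fin q)} (hw : w ≠ []) {p : ℕ}
    (h : (l.drop p).take w.length = w) : p + w.length ≤ l.length := by
  have h1 := congrArg List.length h
  rw [List.length_take, List.length_drop] at h1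
  have hw' : 0 < w.length := List.length_pos_iff.mpr hw
  omega

lemma finite_len {q n : ℕ} (P : List (Fin q) → Prop) (h : ∀ l, P l → l.length = n) :
    Finite {l : List (Fin q) // P l} := by
  haveI : Finite {l : List (Fin q) // l.length = n} :=
    inferInstanceAs (Finite (List.Vector (Fin q) n))
  exact Finite.of_injective
    (fun x : {l : List (Fin q) // P l} => (⟨x.1, h _ x.2⟩ : {l : List (Fin q) // l.length = n}))
    (fun a b hab => Subtype.ext (congrArg (fun v : {l : List (Fin q) // l.length = n} => v.val) hab))

noncomputable def fCount (q : ℕ) (w : List (Fin q)) (n : ℕ) : ℕ :=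
  Nat.card {l : List (Fin q) // l.length = n ∧ ∀ p, (l.drop p).take w.length ≠ w}

variable {q : ℕ}

lemma exists_occ (w u : List (Fin q)) : ∃ p, ((u ++ w).drop p).take w.length = w :=
  ⟨u.length, by rw [List.drop_left' rfl, List.take_length]⟩

def firstOcc (w u : List (Fin q)) : ℕ := Nat.find (exists_occ w u)

lemma firstOcc_spec (w u : List (Fin q)) :
    ((u ++ w).drop (firstOcc w u)).take w.length = w := Nat.find_spec (exists_occ w u)

lemma firstOcc_min {w u : List (Fin q)} {p : ℕ} (hp : p < firstOcc w u) :
    ¬ ((u ++ w).drop p).take w.length = w := Nat.find_min (exists_occ w u) hp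

lemma firstOcc_le (w u : List (Fin q)) : firstOcc w u ≤ u.length :=
  Nat.find_le (by rw [List.drop_left' rfl, List.take_length])

lemma firstOcc_gt {w : List (Fin q)} (hw : w ≠ []) {u : List (Fin q)}
    (havoid : ∀ p, (u.drop p).take w.length ≠ w) :
    u.length < firstOcc w u + w.length := by
  by_contra hc
  push_neg at hc
  apply havoid (firstOcc w u)
  have h2 := take_drop_take (u ++ w) (p := firstOcc w u) (k := w.length) (m := u.length) hc
  rw [List.take_left' rfl] at h2
  rw [h2]
  exact firstOcc_spec w u

lemma fwd_mem {w : List (Fin q)} (hw : w ≠ []) {n : ℕ} {u : List (Fin q)} (hu : u.length = n)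
    (havoid : ∀ p, (u.drop p).take w.length ≠ w) :
    (((u ++ w).take (firstOcc w u + w.length)).length = n + w.length - (n - firstOcc w u) ∧
     ((u ++ w).take (firstOcc w u + w.length)).drop
        (n + w.length - (n - firstOcc w u) - w.length) = w ∧
     ∀ p < n + w.length - (n - firstOcc w u) - w.length,
       (((u ++ w).take (firstOcc w u + w.length)).drop p).take w.length ≠ w) ∧
    w.take (w.length - (n - firstOcc w u)) = w.drop (n - firstOcc w u) := by
  have hle : firstOcc w u ≤ n := hu ▸ firstOcc_le w u
  have hgt : n < firstOcc w u + w.length := hu ▸ firstOcc_gt hw havoid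
  have e1 : n + w.length - (n - firstOcc w u) = firstOcc w u + w.length := by omega
  have e2 : firstOcc w u + w.length - w.length = firstOcc w u := by omega
  rw [e1, e2]
  refine ⟨⟨?_, ?_, ?_⟩, ?_⟩
  · rw [List.length_take, List.length_append, hu]; omega
  · rw [List.drop_take]
    have e3 : firstOcc w u + w.length - firstOcc w u = w.length := by omega
    rw [e3]
    exact firstOcc_spec w u
  · intro p hp h
    rw [take_drop_take _ (by omega : p + w.length ≤ firstOcc w u + w.length)] at h
    exact firstOcc_min hp h
  · have h6 : (((u ++ w).drop (firstOcc w u)).take w.length).drop (n - firstOcc w u) =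
        w.drop (n - firstOcc w u) := by rw [firstOcc_spec w u]
    rw [List.drop_take, List.drop_drop] at h6
    have e4 : firstOcc w u + (n - firstOcc w u) = u.length := by omega
    rw [e4, List.drop_left' rfl] at h6
    exact h6

lemma fwd_take {w : List (Fin q)} (hw : w ≠ []) {n : ℕ} {u : List (Fin q)} (hu : u.length = n)
    (havoid : ∀ p, (u.drop p).take w.length ≠ w) :
    ((u ++ w).take (firstOcc w u + w.length)).take n = u := by
  have hgt : n < firstOcc w u + w.length := hu ▸ firstOcc_gt hw havoid
  rw [List.take_take, min_eq_left (by omega), ← hu]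
  exact List.take_left' rfl

section Back
variable {w : List (Fin q)} {n j : ℕ} {v : List (Fin q)}

lemma back_jn (hj : j < w.length) (hv1 : v.length = n + w.length - j)
    (hv2 : v.drop (n + w.length - j - w.length) = w) : j ≤ n := by
  have h1 := congrArg List.length hv2
  rw [List.length_drop, hv1] at h1
  omega

lemma back_len (hj : j < w.length) (hv1 : v.length = n + w.length - j) (hjn : j ≤ n) :
    (v.take n).length = n := by
  rw [List.length_take, hv1]; omega

lemma back_avoid (hw : w ≠ []) (hj : j < w.length) (hv1 : v.length = n + w.length - j)
    (hv3 : ∀ p < n + w.length - j - w.length, (v.drop p).take w.length ≠ w) (hjn : j ≤ n) :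
    ∀ p, ((v.take n).drop p).take w.length ≠ w := by
  intro p h
  have hle := occ_le hw h
  rw [List.length_take, hv1] at hle
  have hpn : p + w.length ≤ n := by omega
  rw [take_drop_take v hpn] at h
  exact hv3 p (by omega) h

lemma back_app (hj : j < w.length) (hv1 : v.length = n + w.length - j)
    (hv2 : v.drop (n + w.length - j - w.length) = w)
    (hcorr : w.take (w.length - j) = w.drop j) (hjn : j ≤ n) :
    v.take n ++ w = v ++ w.drop (w.length - j) := by
  have e : n + w.length - j - w.length = n - j := by omega
  rw [e] at hv2
  have hdn : v.drop n = w.take (w.length - j) := by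
    have h1 : v.drop n = (v.drop (n - j)).drop j := by
      rw [List.drop_drop]; congr 1; omega
    rw [h1, hv2, ← hcorr]
  conv_rhs => rw [← List.take_append_drop n v]
  rw [hdn, List.append_assoc, List.take_append_drop]

lemma back_firstOcc (hj : j < w.length) (hv1 : v.length = n + w.length - j)
    (hv2 : v.drop (n + w.length - j - w.length) = w)
    (hv3 : ∀ p < n + w.length - j - w.length, (v.drop p).take w.length ≠ w)
    (hcorr : w.take (w.length - j) = w.drop j) (hjn : j ≤ n) :
    firstOcc w (v.take n) = n - j := by
  have happ : v.take n ++ w = v ++ w.drop (w.length - j) := back_app hj hv1 hv2 hcorr hjn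
  rw [firstOcc, Nat.find_eq_iff]
  constructor
  · rw [happ, List.drop_append_of_le_length (by rw [hv1]; omega)]
    have e : n - j = n + w.length - j - w.length := by omega
    rw [e, hv2]
    exact List.take_left' rfl
  · intro p hp h
    have htv : (v.take n ++ w).take (n + w.length - j) = v := by
      rw [happ]; exact List.take_left' hv1
    rw [← take_drop_take (v.take n ++ w)
      (show p + w.length ≤ n + w.length - j by omega), htv] at h
    exact hv3 p (by omega) h

lemma back_take (hj : j < w.length) (hv1 : v.length = n + w.length - j)
    (hv2 : v.drop (n + w.length - j - w.length) = w)
    (hv3 : ∀ p < n + w.length - j - w.length, (v.drop p).take w.length ≠ w)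
    (hcorr : w.take (w.length - j) = w.drop j) (hjn : j ≤ n) :
    (v.take n ++ w).take (firstOcc w (v.take n) + w.length) = v := by
  rw [back_firstOcc hj hv1 hv2 hv3 hcorr hjn]
  have e : n - j + w.length = n + w.length - j := by omega
  rw [e, back_app hj hv1 hv2 hcorr hjn]
  exact List.take_left' hv1

end Back

/-- Predicate for the target of the main bijection. -/
abbrev QB (w : List (Fin q)) (n j : ℕ) (v : List (Fin q)) : Prop :=
  (v.length = n + w.length - j ∧ v.drop (n + w.length - j - w.length) = w ∧
    ∀ p < n + w.length - j - w.length, (v.drop p).take w.length ≠ w) ∧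
  w.take (w.length - j) = w.drop j

lemma sigEq {k : ℕ} {Q : Fin k → List (Fin q) → Prop} {j j' : Fin k} {v v' : List (Fin q)}
    (h1 : j = j') (h2 : v = v') {hv : Q j v} {hv' : Q j' v'} :
    (⟨j, ⟨v, hv⟩⟩ : Σ i : Fin k, {l : List (Fin q) // Q i l}) = ⟨j', ⟨v', hv'⟩⟩ := by
  subst h1; subst h2; rfl

lemma card_f_eq {w : List (Fin q)} (hw : w ≠ []) (n : ℕ) :
    fCount q w n = ∑ j ∈ Finset.range w.length,
      acorrBit w (w.length - j) * hitCount q w (n + w.length - j) := by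
  classical
  have hk : 0 < w.length := List.length_pos_iff.mpr hw
  haveI hFinT : ∀ j : Fin w.length, Finite {v : List (Fin q) // QB w n j.1 v} :=
    fun j => finite_len _ (fun v hv => hv.1.1)
  have step1 : fCount q w n = Nat.card (Σ j : Fin w.length, {v : List (Fin q) // QB w n j.1 v}) := by
    refine Nat.card_eq_of_bijective
      (fun u => ⟨⟨n - firstOcc w u.1, by
          have h1 := firstOcc_gt hw u.2.2
          have h2 := u.2.1
          omega⟩,
        ⟨(u.1 ++ w).take (firstOcc w u.1 + w.length), fwd_mem hw u.2.1 u.2.2⟩⟩) ⟨?_, ?_⟩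
    · intro a b hab
      have h2 : ((a.1 ++ w).take (firstOcc w a.1 + w.length)).take n =
          ((b.1 ++ w).take (firstOcc w b.1 + w.length)).take n :=
        congrArg (fun s : Σ j : Fin w.length, {v : List (Fin q) // QB w n j.1 v} =>
          s.2.1.take n) hab
      rw [fwd_take hw a.2.1 a.2.2, fwd_take hw b.2.1 b.2.2] at h2
      exact Subtype.ext h2
    · rintro ⟨j, v, ⟨⟨hv1, hv2, hv3⟩, hcorr⟩⟩
      have hjn : j.1 ≤ n := back_jn j.2 hv1 hv2
      refine ⟨⟨v.take n, back_len j.2 hv1 hjn, back_avoid hw j.2 hv1 hv3 hjn⟩, ?_⟩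
      beta_reduce
      exact sigEq (Q := fun (i : Fin w.length) (l : List (Fin q)) => QB w n i.1 l)
        (Fin.ext (by
          show n - firstOcc w (v.take n) = j.1
          rw [back_firstOcc j.2 hv1 hv2 hv3 hcorr hjn]; omega))
        (back_take j.2 hv1 hv2 hv3 hcorr hjn)
  have step2 : Nat.card (Σ j : Fin w.length, {v : List (Fin q) // QB w n j.1 v}) =
      ∑ j : Fin w.length, Nat.card {v : List (Fin q) // QB w n j.1 v} := by
    haveI : ∀ j : Fin w.length, Fintype {v : List (Fin q) // QB w n j.1 v} :=
      fun j => Fintype.ofFinite _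
    rw [Nat.card_eq_fintype_card, Fintype.card_sigma]
    simp [Nat.card_eq_fintype_card]
  have step3 : ∀ j : Fin w.length, Nat.card {v : List (Fin q) // QB w n j.1 v} =
      acorrBit w (w.length - j.1) * hitCount q w (n + w.length - j.1) := by
    intro j
    have ej : w.length - (w.length - j.1) = j.1 := by omega
    rw [acorrBit, ej]
    by_cases hc : w.take (w.length - j.1) = w.drop j.1
    · rw [if_pos hc, one_mul]
      exact Nat.card_congr (Equiv.subtypeEquivRight (fun v => and_iff_left hc))
    · rw [if_neg hc, zero_mul]
      haveI : IsEmpty {v : List (Fin q) // QB w n j.1 v} := ⟨fun v => hc v.2.2⟩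
      exact Nat.card_of_isEmpty
  rw [step1, step2, Finset.sum_congr rfl (fun j _ => step3 j), Finset.sum_range]

/-- Split: words with at most a final occurrence = (ends with first occ) ⊕ (avoiding). -/
def splitEquiv (hw : w ≠ []) (n : ℕ) :
    {l : List (Fin q) // l.length = n + 1 ∧ ∀ p < n + 1 - w.length, (l.drop p).take w.length ≠ w} ≃
    {l : List (Fin q) // l.length = n + 1 ∧ l.drop (n + 1 - w.length) = w ∧
        ∀ p < n + 1 - w.length, (l.drop p).take w.length ≠ w} ⊕
      {l : List (Fin q) // l.length = n + 1 ∧ ∀ p, (l.drop p).take w.length ≠ w} where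
  toFun l := if hd : l.1.drop (n + 1 - w.length) = w
    then Sum.inl ⟨l.1, l.2.1, hd, l.2.2⟩
    else Sum.inr ⟨l.1, l.2.1, by
      intro p h
      have hle := occ_le hw h
      rcases Nat.lt_or_ge p (n + 1 - w.length) with hp | hp
      · exact l.2.2 p hp h
      · have hpe : p = n + 1 - w.length := by have := l.2.1; omega
        subst hpe
        exact hd ((List.take_of_length_le
          (by rw [List.length_drop, l.2.1]; omega)).symm.trans h)⟩
  invFun s := s.elim (fun v => ⟨v.1, v.2.1, v.2.2.2⟩) (fun u => ⟨u.1, u.2.1, fun p _ => u.2.2 p⟩)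
  left_inv l := by
    by_cases hd : l.1.drop (n + 1 - w.length) = w <;> simp [hd]
  right_inv s := by
    rcases s with v | u
    · simp [v.2.2.1]
    · have hd : ¬ (u.1.drop (n + 1 - w.length) = w) := fun hd =>
        u.2.2 (n + 1 - w.length) (by rw [hd]; exact List.take_length)
      simp [hd]

/-- Stripping the last letter of a word with at most a final occurrence. -/
def appendEquiv (hw : w ≠ []) (n : ℕ) :
    {l : List (Fin q) // l.length = n + 1 ∧ ∀ p < n + 1 - w.length, (l.drop p).take w.length ≠ w} ≃
    {l : List (Fin q) // l.length = n ∧ ∀ p, (l.drop p).take w.length ≠ w} ×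
      {t : List (Fin q) // t.length = 1} where
  toFun l := (⟨l.1.take n, by rw [List.length_take, l.2.1]; omega, by
      intro p h
      have hle := occ_le hw h
      rw [List.length_take, l.2.1] at hle
      have hpn : p + w.length ≤ n := by omega
      rw [take_drop_take l.1 hpn] at h
      exact l.2.2 p (by omega) h⟩,
    ⟨l.1.drop n, by rw [List.length_drop, l.2.1]; omega⟩)
  invFun ut := ⟨ut.1.1 ++ ut.2.1, by rw [List.length_append, ut.1.2.1, ut.2.2], by
      intro p hp h
      have hpn : p + w.length ≤ n := by omega
      have h2 : (((ut.1.1 ++ ut.2.1).take n).drop p).take w.length = w := by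
        rw [take_drop_take _ hpn]; exact h
      rw [List.take_left' ut.1.2.1] at h2
      exact ut.1.2.2 p h2⟩
  left_inv l := Subtype.ext (List.take_append_drop n l.1)
  right_inv ut := by
    refine Prod.ext (Subtype.ext ?_) (Subtype.ext ?_)
    · exact List.take_left' ut.1.2.1
    · exact List.drop_left' ut.1.2.1

lemma card_len_one (q : ℕ) : Nat.card {l : List (Fin q) // l.length = 1} = q := by
  have h : Nat.card {l : List (Fin q) // l.length = 1} = Nat.card (List.Vector (Fin q) 1) := rfl
  rw [h, Nat.card_eq_fintype_card, card_vector]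
  simp

lemma hit_zero {w : List (Fin q)} (hw : w ≠ []) {m : ℕ} (hm : m < w.length) :
    hitCount q w m = 0 := by
  haveI : IsEmpty {l : List (Fin q) // l.length = m ∧ l.drop (m - w.length) = w ∧
      ∀ p < m - w.length, (l.drop p).take w.length ≠ w} := by
    constructor
    rintro ⟨l, hl, hd, -⟩
    have h0 : m - w.length = 0 := by omega
    rw [h0, List.drop_zero] at hd
    have := congrArg List.length hd
    rw [hl] at this
    omega
  exact Nat.card_of_isEmpty

lemma f_zero {w : List (Fin q)} (hw : w ≠ []) : fCount q w 0 = 1 := by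
  haveI : Unique {l : List (Fin q) // l.length = 0 ∧ ∀ p, (l.drop p).take w.length ≠ w} :=
    { default := ⟨[], rfl, fun p h => hw (by simpa using h.symm)⟩
      uniq := fun l => Subtype.ext (List.length_eq_zero_iff.mp l.2.1) }
  exact Nat.card_unique


lemma main1 {w : List (Fin q)} (hw : w ≠ []) (n : ℕ) :
    fCount q w (n + 1) + hitCount q w (n + 1) = q * fCount q w n := by
  classical
  haveI : Finite {l : List (Fin q) // l.length = n + 1 ∧
      ∀ p < n + 1 - w.length, (l.drop p).take w.length ≠ w} := finite_len _ (fun l h => h.1)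
  haveI : Finite {l : List (Fin q) // l.length = n + 1 ∧ l.drop (n + 1 - w.length) = w ∧
      ∀ p < n + 1 - w.length, (l.drop p).take w.length ≠ w} := finite_len _ (fun l h => h.1)
  haveI : Finite {l : List (Fin q) // l.length = n + 1 ∧
      ∀ p, (l.drop p).take w.length ≠ w} := finite_len _ (fun l h => h.1)
  haveI : Finite {l : List (Fin q) // l.length = n ∧
      ∀ p, (l.drop p).take w.length ≠ w} := finite_len _ (fun l h => h.1)
  haveI : Finite {l : List (Fin q) // l.length = 1} := finite_len _ (fun l h => h)
  have e1 : Nat.card {l : List (Fin q) // l.length = n + 1 ∧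
      ∀ p < n + 1 - w.length, (l.drop p).take w.length ≠ w} =
      hitCount q w (n + 1) + fCount q w (n + 1) := by
    rw [Nat.card_congr (splitEquiv hw n), Nat.card_sum]
    rfl
  have e2 : Nat.card {l : List (Fin q) // l.length = n + 1 ∧
      ∀ p < n + 1 - w.length, (l.drop p).take w.length ≠ w} =
      fCount q w n * q := by
    rw [Nat.card_congr (appendEquiv hw n), Nat.card_prod, card_len_one]
    rfl
  rw [Nat.add_comm, ← e1, e2, Nat.mul_comm]

end Stmt18Proof

/-- Generating function identity: for `q ≥ 2` and a word `w` of length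
`k ≥ 1`, as formal power series over `ℚ`,
`(z^k + (1 − q·z)·Â_w(z)) · ∑ h_w(n)·z^n = z^k`, where
`Â_w(z) = ∑_{i=1}^{k} b_i·z^(k−i)` is the autocorrelation polynomial of `w`. -/
theorem stmt18 (q k : ℕ) (hq : 2 ≤ q) (hk : 1 ≤ k) (w : List (Fin q)) (hwlen : w.length = k) :
    (PowerSeries.X ^ k +
        (1 - PowerSeries.C (q : ℚ) * PowerSeries.X) *
          (∑ j ∈ Finset.range k,
            PowerSeries.C (acorrBit w (k - j) : ℚ) * PowerSeries.X ^ j)) *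
      PowerSeries.mk (fun n => (hitCount q w n : ℚ)) = PowerSeries.X ^ k := by
  classical
  subst hwlen
  have hw : w ≠ [] := by
    intro h
    rw [h] at hk
    simp at hk
  have hk' : 0 < w.length := hk
  set A : PowerSeries ℚ := ∑ j ∈ Finset.range w.length,
      PowerSeries.C (acorrBit w (w.length - j) : ℚ) * PowerSeries.X ^ j with hA
  set H : PowerSeries ℚ := PowerSeries.mk fun n => (hitCount q w n : ℚ) with hH
  set F : PowerSeries ℚ := PowerSeries.mk
      fun n => (Stmt18Proof.fCount q w n : ℚ) with hF
  have I1 : (1 - PowerSeries.C (q : ℚ) * PowerSeries.X) * F = 1 - H := by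
    ext m
    rw [sub_mul, one_mul, map_sub, map_sub, mul_assoc, PowerSeries.coeff_C_mul]
    cases m with
    | zero =>
      simp [hF, hH, PowerSeries.coeff_zero_eq_constantCoeff, map_mul,
        Stmt18Proof.f_zero hw, Stmt18Proof.hit_zero hw hk']
    | succ m' =>
      rw [PowerSeries.coeff_succ_X_mul, hF, hH, PowerSeries.coeff_mk, PowerSeries.coeff_mk,
        PowerSeries.coeff_mk, PowerSeries.coeff_one, if_neg (Nat.succ_ne_zero m')]
      have hnat := Stmt18Proof.main1 hw m'
      have hcast : (Stmt18Proof.fCount q w (m' + 1) : ℚ) + (hitCount q w (m' + 1) : ℚ) =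
          (q : ℚ) * (Stmt18Proof.fCount q w m' : ℚ) := by exact_mod_cast congrArg Nat.cast hnat
      linarith
  have I2 : A * H = PowerSeries.X ^ w.length * F := by
    ext m
    have hR : (PowerSeries.coeff m) (PowerSeries.X ^ w.length * F) =
        if w.length ≤ m then (Stmt18Proof.fCount q w (m - w.length) : ℚ) else 0 := by
      rw [mul_comm, PowerSeries.coeff_mul_X_pow']
      by_cases hkm : w.length ≤ m
      · rw [if_pos hkm, if_pos hkm, hF, PowerSeries.coeff_mk]
      · rw [if_neg hkm, if_neg hkm]
    rw [hA, Finset.sum_mul, map_sum, hR]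
    have hL : ∀ j ∈ Finset.range w.length,
        (PowerSeries.coeff m) (PowerSeries.C (acorrBit w (w.length - j) : ℚ) *
          PowerSeries.X ^ j * H) =
        (acorrBit w (w.length - j) : ℚ) * (if j ≤ m then (hitCount q w (m - j) : ℚ) else 0) := by
      intro j hj
      rw [mul_assoc, mul_comm (PowerSeries.X ^ j) H, PowerSeries.coeff_C_mul,
        PowerSeries.coeff_mul_X_pow']
      by_cases hjm : j ≤ m
      · rw [if_pos hjm, if_pos hjm, hH, PowerSeries.coeff_mk]
      · rw [if_neg hjm, if_neg hjm]
    rw [Finset.sum_congr rfl hL]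
    by_cases hkm : w.length ≤ m
    · rw [if_pos hkm]
      rw [Stmt18Proof.card_f_eq hw (m - w.length)]
      push_cast
      refine Finset.sum_congr rfl fun j hj => ?_
      rw [if_pos (show j ≤ m by have := Finset.mem_range.mp hj; omega),
        show m - w.length + w.length - j = m - j from by omega]
    · rw [if_neg hkm]
      refine Finset.sum_eq_zero fun j hj => ?_
      by_cases hjm : j ≤ m
      · rw [if_pos hjm, Stmt18Proof.hit_zero hw (show m - j < w.length by omega)]
        simp
      · rw [if_neg hjm, mul_zero]
  rw [add_mul, mul_assoc, I2, ← mul_assoc,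
    mul_comm (1 - PowerSeries.C (q : ℚ) * PowerSeries.X) (PowerSeries.X ^ w.length),
    mul_assoc, I1, mul_sub, mul_one]
  ring
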